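/- arXiv:1902.05549 — 5 statements merged into one kernel-verified Lean document; each statement's English description precedes it below -/
import Mathlib

section
/- For all real numbers a ≥ 0, b ≥ 0 and c > 0, one has 0 ≤ 1/(a+b+c) - 1/(a+c) - 1/(b+c) + 1/c ≤ √(a·b)/(2c²). -/
theorem elementary_inequality (a b c : ℝ) (ha : 0 ≤ a) (hb : 0 ≤ b) (hc : 0 < c) :
    0 ≤ 1 / (a + b + c) - 1 / (a + c) - 1 / (b + c) + 1 / c ∧
    1 / (a + b + c) - 1 / (a + c) - 1 / (b + c) + 1 / c ≤ Real.sqrt (a * b) / (2 * c ^ 2) := by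
  have h1 : 0 < a + c := by linarith
  have h2 : 0 < b + c := by linarith
  have h3 : 0 < a + b + c := by linarith
  have key : 1 / (a + b + c) - 1 / (a + c) - 1 / (b + c) + 1 / c
      = a * b * (a + b + 2 * c) / (c * (a + c) * (b + c) * (a + b + c)) := by
    field_simp
    ring
  constructor
  · rw [key]; positivity
  · rw [key]
    set s := Real.sqrt (a * b) with hs
    have hs0 : 0 ≤ s := Real.sqrt_nonneg _
    have hs2 : s ^ 2 = a * b := Real.sq_sqrt (mul_nonneg ha hb)
    have hsab : 2 * s ≤ a + b := by nlinarith [sq_nonneg (a - b), sq_nonneg (a + b - 2 * s)]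
    have h4 : 0 ≤ a + b + 2 * c := by linarith
    have hkey2 : 2 * c * s * (a + b + 2 * c) ≤ (a + c) * (b + c) * (a + b + c) := by
      have hm := mul_le_mul_of_nonneg_left hsab (mul_nonneg hc.le h4)
      nlinarith [mul_nonneg (mul_nonneg ha hb) h3.le, pow_pos hc 3]
    rw [div_le_div_iff₀ (by positivity) (by positivity)]
    calc a * b * (a + b + 2 * c) * (2 * c ^ 2)
        = (s * c) * (2 * c * s * (a + b + 2 * c)) := by rw [← hs2]; ring
      _ ≤ (s * c) * ((a + c) * (b + c) * (a + b + c)) :=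
          mul_le_mul_of_nonneg_left hkey2 (mul_nonneg hs0 hc.le)
      _ = s * (c * (a + c) * (b + c) * (a + b + c)) := by ring
end

section
/- Let λ ∈ L²(ℝᵈ), ω : ℝᵈ → [0,∞) measurable, c > 0, and define Ψ₂(k₁,k₂) = 1/(ω(k₁)+ω(k₂)+c) - 1/(ω(k₁)+c) - 1/(ω(k₂)+c) + 1/c. Then for every ψ ∈ L²(ℝᵈ) with ∫ ω(k)|ψ(k)|² dk < ∞, one has |∫∫ conj(λ(k₁))λ(k₂) Ψ₂(k₁,k₂) ψ(k₂) conj(ψ(k₁)) dk₁ dk₂| ≤ (‖λ‖²/(2c²)) · ∫ ω(k)|ψ(k)|² dk. -/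
open MeasureTheory

lemma psi_abs_le {a b c : ℝ} (ha : 0 ≤ a) (hb : 0 ≤ b) (hc : 0 < c) :
    |1/(a+b+c) - 1/(a+c) - 1/(b+c) + 1/c| ≤ Real.sqrt a * Real.sqrt b / (2*c^2) := by
  have hac : 0 < a + c := by linarith
  have hbc : 0 < b + c := by linarith
  have habc : 0 < a + b + c := by linarith
  have hE : 1/(a+b+c) - 1/(a+c) - 1/(b+c) + 1/c
      = a*b*(a+b+2*c)/(c*(a+c)*(b+c)*(a+b+c)) := by
    field_simp
    ring
  rw [hE]
  set t := Real.sqrt a * Real.sqrt b with htdef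
  have ht0 : 0 ≤ t := mul_nonneg (Real.sqrt_nonneg a) (Real.sqrt_nonneg b)
  have ht2 : t^2 = a*b := by
    rw [htdef, mul_pow, Real.sq_sqrt ha, Real.sq_sqrt hb]
  have htab : 2*t ≤ a + b := by
    nlinarith [sq_nonneg (Real.sqrt a - Real.sqrt b), Real.sq_sqrt ha, Real.sq_sqrt hb]
  rw [abs_of_nonneg (by positivity)]
  rw [div_le_div_iff₀ (by positivity) (by positivity)]
  have hbr : c^2 ≤ (a+b+c)^2 - 2*t*(a+b+2*c) := by
    nlinarith [mul_le_mul_of_nonneg_right htab (by positivity : (0:ℝ) ≤ a+b+2*c)]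
  have h2 : 2*t*(a+b+2*c) ≤ (a+b+c)^2 - c^2 := by linarith
  calc a*b*(a+b+2*c)*(2*c^2) = (c^2*t) * (2*t*(a+b+2*c)) := by rw [← ht2]; ring
    _ ≤ (c^2*t) * ((a+b+c)^2 - c^2) :=
        mul_le_mul_of_nonneg_left h2 (by positivity)
    _ ≤ c*(a+b+c)*t^3 + c^2*t*(a+b+c)^2 := by
        nlinarith [mul_nonneg ht0 (sq_nonneg c),
          mul_nonneg (mul_nonneg (mul_nonneg hc.le ht0) (mul_nonneg ht0 ht0)) habc.le]
    _ = t * (c*(a+c)*(b+c)*(a+b+c)) := by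
        linear_combination (c*t*(a+b+c)) * ht2

/-- Cauchy–Schwarz bound on the quadratic form of the integral operator K₂. -/
theorem K2_quadratic_form_bound {d : ℕ} (c : ℝ) (hc : 0 < c)
    (lam : (Fin d → ℝ) → ℂ) (hlam : MemLp lam 2 volume)
    (ω : (Fin d → ℝ) → ℝ) (hω : Measurable ω) (hω0 : ∀ k, 0 ≤ ω k)
    (Ψ₂ : (Fin d → ℝ) → (Fin d → ℝ) → ℝ)
    (hΨ₂ : ∀ k₁ k₂, Ψ₂ k₁ k₂ =
      1 / (ω k₁ + ω k₂ + c) - 1 / (ω k₁ + c) - 1 / (ω k₂ + c) + 1 / c)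
    (ψ : (Fin d → ℝ) → ℂ) (hψ : MemLp ψ 2 volume)
    (hωψ : Integrable (fun k => ω k * ‖ψ k‖ ^ 2) volume) :
    ‖∫ k₁, ∫ k₂, (starRingEnd ℂ) (lam k₁) * lam k₂ * (Ψ₂ k₁ k₂ : ℂ)
        * ψ k₂ * (starRingEnd ℂ) (ψ k₁)‖
      ≤ (∫ q, ‖lam q‖ ^ 2) / (2 * c ^ 2) * ∫ k, ω k * ‖ψ k‖ ^ 2 := by
  set g : (Fin d → ℝ) → ℝ := fun k => Real.sqrt (ω k) * ‖ψ k‖ with hgdef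
  set G : (Fin d → ℝ) → ℝ := fun k => ‖lam k‖ * g k with hGdef
  have hg_meas : AEStronglyMeasurable g volume :=
    hω.sqrt.aestronglyMeasurable.mul hψ.1.norm
  have hgsq : ∀ k, g k ^ 2 = ω k * ‖ψ k‖ ^ 2 := fun k => by
    simp only [hgdef, mul_pow, Real.sq_sqrt (hω0 k)]
  have hg2 : MemLp g 2 volume := by
    refine (memLp_two_iff_integrable_sq hg_meas).mpr ?_
    exact hωψ.congr (Filter.Eventually.of_forall fun k => (hgsq k).symm)
  have hG : Integrable G volume := by
    have hs : MemLp ((fun k => ‖lam k‖) • g) 1 volume :=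
      hg2.smul hlam.norm (hpqr := ⟨by rw [inv_one]; exact ENNReal.inv_two_add_inv_two⟩)
    exact memLp_one_iff_integrable.mp hs
  have hGnn : ∀ k, 0 ≤ G k := fun k =>
    mul_nonneg (norm_nonneg _) (mul_nonneg (Real.sqrt_nonneg _) (norm_nonneg _))
  set S := ∫ k, G k with hSdef
  have hS0 : 0 ≤ S := integral_nonneg hGnn
  -- pointwise bound on the integrand
  have hpt : ∀ k₁ k₂, ‖(starRingEnd ℂ) (lam k₁) * lam k₂ * (Ψ₂ k₁ k₂ : ℂ)
      * ψ k₂ * (starRingEnd ℂ) (ψ k₁)‖ ≤ (G k₁ / (2*c^2)) * G k₂ := by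
    intro k₁ k₂
    have habs : |Ψ₂ k₁ k₂| ≤ Real.sqrt (ω k₁) * Real.sqrt (ω k₂) / (2*c^2) := by
      rw [hΨ₂ k₁ k₂]; exact psi_abs_le (hω0 k₁) (hω0 k₂) hc
    have hnorm : ‖(starRingEnd ℂ) (lam k₁) * lam k₂ * (Ψ₂ k₁ k₂ : ℂ)
        * ψ k₂ * (starRingEnd ℂ) (ψ k₁)‖
        = ‖lam k₁‖ * ‖lam k₂‖ * |Ψ₂ k₁ k₂| * ‖ψ k₂‖ * ‖ψ k₁‖ := by
      simp [norm_mul, Complex.norm_real, Real.norm_eq_abs]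
    rw [hnorm]
    have h1 : ‖lam k₁‖ * ‖lam k₂‖ * |Ψ₂ k₁ k₂| * ‖ψ k₂‖ * ‖ψ k₁‖
        ≤ ‖lam k₁‖ * ‖lam k₂‖ * (Real.sqrt (ω k₁) * Real.sqrt (ω k₂) / (2*c^2))
          * ‖ψ k₂‖ * ‖ψ k₁‖ := by
      gcongr
    calc ‖lam k₁‖ * ‖lam k₂‖ * |Ψ₂ k₁ k₂| * ‖ψ k₂‖ * ‖ψ k₁‖
        ≤ ‖lam k₁‖ * ‖lam k₂‖ * (Real.sqrt (ω k₁) * Real.sqrt (ω k₂) / (2*c^2))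
          * ‖ψ k₂‖ * ‖ψ k₁‖ := h1
      _ = (G k₁ / (2*c^2)) * G k₂ := by simp only [hGdef, hgdef]; ring
  -- bound on the inner integral
  have hinner : ∀ k₁, ‖∫ k₂, (starRingEnd ℂ) (lam k₁) * lam k₂ * (Ψ₂ k₁ k₂ : ℂ)
      * ψ k₂ * (starRingEnd ℂ) (ψ k₁)‖ ≤ G k₁ * (S / (2*c^2)) := by
    intro k₁
    calc ‖∫ k₂, (starRingEnd ℂ) (lam k₁) * lam k₂ * (Ψ₂ k₁ k₂ : ℂ)
          * ψ k₂ * (starRingEnd ℂ) (ψ k₁)‖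
        ≤ ∫ k₂, ‖(starRingEnd ℂ) (lam k₁) * lam k₂ * (Ψ₂ k₁ k₂ : ℂ)
          * ψ k₂ * (starRingEnd ℂ) (ψ k₁)‖ := norm_integral_le_integral_norm _
      _ ≤ ∫ k₂, (G k₁ / (2*c^2)) * G k₂ := by
          refine integral_mono_of_nonneg (Filter.Eventually.of_forall fun k₂ => norm_nonneg _)
            (hG.const_mul _) (Filter.Eventually.of_forall fun k₂ => hpt k₁ k₂)
      _ = (G k₁ / (2*c^2)) * S := by rw [integral_const_mul]
      _ = G k₁ * (S / (2*c^2)) := by ring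
  -- bound on the double integral
  have houter : ‖∫ k₁, ∫ k₂, (starRingEnd ℂ) (lam k₁) * lam k₂ * (Ψ₂ k₁ k₂ : ℂ)
      * ψ k₂ * (starRingEnd ℂ) (ψ k₁)‖ ≤ S * (S / (2*c^2)) := by
    calc ‖∫ k₁, ∫ k₂, (starRingEnd ℂ) (lam k₁) * lam k₂ * (Ψ₂ k₁ k₂ : ℂ)
          * ψ k₂ * (starRingEnd ℂ) (ψ k₁)‖
        ≤ ∫ k₁, ‖∫ k₂, (starRingEnd ℂ) (lam k₁) * lam k₂ * (Ψ₂ k₁ k₂ : ℂ)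
          * ψ k₂ * (starRingEnd ℂ) (ψ k₁)‖ := norm_integral_le_integral_norm _
      _ ≤ ∫ k₁, G k₁ * (S / (2*c^2)) := by
          refine integral_mono_of_nonneg (Filter.Eventually.of_forall fun k₁ => norm_nonneg _)
            (hG.mul_const _) (Filter.Eventually.of_forall fun k₁ => hinner k₁)
      _ = S * (S / (2*c^2)) := by rw [integral_mul_const]
  -- Cauchy–Schwarz for S
  set A := ∫ q, ‖lam q‖ ^ 2 with hAdef
  set B := ∫ k, ω k * ‖ψ k‖ ^ 2 with hBdef
  have hA0 : 0 ≤ A := integral_nonneg fun q => sq_nonneg _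
  have hB0 : 0 ≤ B := integral_nonneg fun k => mul_nonneg (hω0 k) (sq_nonneg _)
  have hCS : S ≤ Real.sqrt A * Real.sqrt B := by
    have h22 : Real.HolderConjugate 2 2 := by
      rw [Real.holderConjugate_iff_eq_conjExponent] <;> norm_num
    have hlam2 : MemLp (fun k => ‖lam k‖) (ENNReal.ofReal 2) volume := by
      rw [ENNReal.ofReal_ofNat]; exact hlam.norm
    have hg2' : MemLp g (ENNReal.ofReal 2) volume := by
      rw [ENNReal.ofReal_ofNat]; exact hg2
    have := integral_mul_le_Lp_mul_Lq_of_nonneg h22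
      (Filter.Eventually.of_forall fun k => norm_nonneg (lam k))
      (Filter.Eventually.of_forall fun k =>
        mul_nonneg (Real.sqrt_nonneg _) (norm_nonneg _)) hlam2 hg2'
    have hBeq : (∫ k, g k ^ (2:ℝ)) = B := by
      rw [hBdef]
      refine integral_congr_ae (Filter.Eventually.of_forall fun k => ?_)
      show g k ^ (2:ℝ) = ω k * ‖ψ k‖ ^ 2
      rw [Real.rpow_two]
      exact hgsq k
    have hAeq : (∫ k, ‖lam k‖ ^ (2:ℝ)) = A := by
      rw [hAdef]
      refine integral_congr_ae (Filter.Eventually.of_forall fun k => ?_)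
      show ‖lam k‖ ^ (2:ℝ) = ‖lam k‖ ^ 2
      rw [Real.rpow_two]
    rw [hAeq, hBeq] at this
    calc S = ∫ k, ‖lam k‖ * g k := by rfl
      _ ≤ A ^ ((1:ℝ)/2) * B ^ ((1:ℝ)/2) := this
      _ = Real.sqrt A * Real.sqrt B := by
          rw [Real.sqrt_eq_rpow, Real.sqrt_eq_rpow]
  have hSS : S * S ≤ A * B := by
    nlinarith [Real.sq_sqrt hA0, Real.sq_sqrt hB0, Real.sqrt_nonneg A, Real.sqrt_nonneg B]
  calc ‖∫ k₁, ∫ k₂, (starRingEnd ℂ) (lam k₁) * lam k₂ * (Ψ₂ k₁ k₂ : ℂ)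
        * ψ k₂ * (starRingEnd ℂ) (ψ k₁)‖ ≤ S * (S / (2*c^2)) := houter
    _ = S * S / (2*c^2) := by ring
    _ ≤ A * B / (2*c^2) := by gcongr
    _ = A / (2*c^2) * B := by ring
end

section
/- Let λ ∈ L²(ℝᵈ) with ‖λ‖ > 0, ω : ℝᵈ → [0,∞) measurable, ε > 0, σ ∈ {+1,-1}, and for large α > 0 let E(α) be the unique zero in (-∞, σε) of Φ_α(z) = -σε - z - α² ∫ |λ(q)|²/(ω(q)+σε-z) dq. Then E(α) = -‖λ‖α + o(α) as α → +∞. -/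
set_option maxHeartbeats 1000000
open MeasureTheory Filter Asymptotics

private lemma lam_sq_integrable {d : ℕ} (lam : (Fin d → ℝ) → ℂ)
    (hlam : MemLp lam 2 volume) : Integrable (fun q => ‖lam q‖^2) volume := by
  have := hlam.integrable_norm_rpow (by norm_num) (by norm_num)
  simpa [Real.rpow_natCast] using this

private lemma f_integrable {d : ℕ} (lam : (Fin d → ℝ) → ℂ) (hlam : MemLp lam 2 volume)
    (ω : (Fin d → ℝ) → ℝ) (hω : Measurable ω) (hω0 : ∀ k, 0 ≤ ω k)
    (t : ℝ) (ht : 0 < t) :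
    Integrable (fun q => ‖lam q‖^2 / (ω q + t)) volume := by
  have hInt := lam_sq_integrable lam hlam
  have hm : AEStronglyMeasurable (fun q => ‖lam q‖^2 / (ω q + t)) volume :=
    ((hlam.aestronglyMeasurable.norm.aemeasurable.pow_const 2).div
      ((hω.aemeasurable.add_const t))).aestronglyMeasurable
  refine (hInt.div_const t).mono' hm (Filter.Eventually.of_forall fun q => ?_)
  have h1 : 0 < ω q + t := by nlinarith [hω0 q]
  rw [Real.norm_eq_abs, abs_of_nonneg (by positivity)]
  exact div_le_div_of_nonneg_left (by positivity) ht (by nlinarith [hω0 q])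

private lemma exists_cutoff {d : ℕ} (lam : (Fin d → ℝ) → ℂ) (hlam : MemLp lam 2 volume)
    (ω : (Fin d → ℝ) → ℝ) (hω : Measurable ω)
    (L' : ℝ) (hL' : L' < ∫ q, ‖lam q‖^2) :
    ∃ M : ℝ, 0 ≤ M ∧ L' ≤ ∫ q, Set.indicator {q | ω q ≤ M} (fun q => ‖lam q‖^2) q := by
  have hInt := lam_sq_integrable lam hlam
  have hTend : Tendsto (fun n : ℕ => ∫ q, Set.indicator {q | ω q ≤ (n:ℝ)} (fun q => ‖lam q‖^2) q)
      atTop (nhds (∫ q, ‖lam q‖^2)) := by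
    apply tendsto_integral_of_dominated_convergence (fun q => ‖lam q‖^2)
    · intro n
      exact (hInt.aestronglyMeasurable).indicator (hω measurableSet_Iic)
    · exact hInt
    · intro n
      filter_upwards with q
      rw [Real.norm_eq_abs]
      simp only [Set.indicator_apply, Set.mem_setOf_eq]
      split
      · rw [abs_of_nonneg (by positivity)]
      · simp
    · filter_upwards with q
      have h : ∀ᶠ n : ℕ in atTop,
          Set.indicator {q | ω q ≤ (n:ℝ)} (fun q => ‖lam q‖^2) q = ‖lam q‖^2 := by
        filter_upwards [eventually_ge_atTop ⌈ω q⌉₊] with n hn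
        exact Set.indicator_of_mem
          (by simpa using (Nat.le_ceil (ω q)).trans (by exact_mod_cast hn)) _
      exact Tendsto.congr' (h.mono fun n hn => hn.symm) tendsto_const_nhds
  obtain ⟨n, hn⟩ := (hTend.eventually (eventually_ge_nhds hL')).exists
  exact ⟨n, Nat.cast_nonneg n, hn⟩

/-- Large-coupling asymptotics of the bottom of the essential spectrum:
E(α) = -‖λ‖·α + o(α) as α → +∞. -/
theorem E_alpha_asymptotics {d : ℕ} (ε σ : ℝ) (hε : 0 < ε) (hσ : σ = 1 ∨ σ = -1)
    (lam : (Fin d → ℝ) → ℂ) (hlam : MemLp lam 2 volume)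
    (hlamnorm : 0 < ∫ q, ‖lam q‖ ^ 2)
    (ω : (Fin d → ℝ) → ℝ) (hω : Measurable ω) (hω0 : ∀ k, 0 ≤ ω k)
    (E : ℝ → ℝ)
    (hE : ∀ᶠ α in atTop, E α < σ * ε ∧
      -σ * ε - E α - α ^ 2 * ∫ q, ‖lam q‖ ^ 2 / (ω q + σ * ε - E α) = 0) :
    (fun α => E α + Real.sqrt (∫ q, ‖lam q‖ ^ 2) * α) =o[atTop] (fun α : ℝ => α) := by
  have hInt := lam_sq_integrable lam hlam
  set L : ℝ := ∫ q, ‖lam q‖ ^ 2 with hLdef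
  clear_value L
  set s : ℝ := Real.sqrt L with hsdef
  clear_value s
  have hs0 : 0 < s := by rw [hsdef]; exact Real.sqrt_pos.mpr hlamnorm
  have hsL : s ^ 2 = L := by rw [hsdef]; exact Real.sq_sqrt hlamnorm.le
  have he2 : (σ * ε) ^ 2 = ε ^ 2 := by rcases hσ with h | h <;> subst h <;> ring
  have heabs : σ * ε ≤ ε ∧ -ε ≤ σ * ε := by
    rcases hσ with h | h <;> subst h <;> constructor <;> nlinarith
  rw [isLittleO_iff]
  intro c hc
  -- choose b slightly below s
  set b : ℝ := s - min (c / 2) (s / 2) with hbdef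
  clear_value b
  have hminpos : 0 < min (c / 2) (s / 2) := lt_min (by linarith) (by linarith)
  have hb0 : 0 < b := by
    have : min (c / 2) (s / 2) ≤ s / 2 := min_le_right _ _
    simp only [hbdef]; linarith
  have hbs : b < s := by simp only [hbdef]; linarith
  have hsb : s - b ≤ c / 2 := by
    have : min (c / 2) (s / 2) ≤ c / 2 := min_le_left _ _
    simp only [hbdef]; linarith
  have hL' : b ^ 2 < L := by nlinarith
  obtain ⟨M, hM0, hMle⟩ := exists_cutoff lam hlam ω hω (b ^ 2) (by rw [← hLdef]; exact hL')
  set g : (Fin d → ℝ) → ℝ := Set.indicator {q | ω q ≤ M} (fun q => ‖lam q‖^2) with hgdef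
  clear_value g
  have hgInt : Integrable g volume := by rw [hgdef]; exact hInt.indicator (hω measurableSet_Iic)
  -- main estimate, eventually in α
  filter_upwards [hE, eventually_ge_atTop (1 : ℝ),
      eventually_ge_atTop ((M + 1) * (2 * ε + 1) / b),
      eventually_ge_atTop (2 * (M + 3 * ε + 1) / c),
      eventually_ge_atTop (ε / c)] with α ⟨h1, h2⟩ hα1 hα2 hα3 hα4
  have hα0 : (0:ℝ) < α := lt_of_lt_of_le one_pos hα1
  set t : ℝ := σ * ε - E α with htdef
  clear_value t
  have ht : 0 < t := by simp only [htdef]; linarith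
  have hrw : (fun q => ‖lam q‖ ^ 2 / (ω q + σ * ε - E α))
      = fun q => ‖lam q‖ ^ 2 / (ω q + t) := by
    funext q; simp only [htdef]; ring_nf
  rw [hrw] at h2
  have hf : Integrable (fun q => ‖lam q‖^2 / (ω q + t)) volume :=
    f_integrable lam hlam ω hω hω0 t ht
  have heq : t - 2 * (σ * ε) = α ^ 2 * ∫ q, ‖lam q‖ ^ 2 / (ω q + t) := by
    have h' := htdef
    linarith
  -- upper bound on the integral
  have hup : (∫ q, ‖lam q‖ ^ 2 / (ω q + t)) ≤ L / t := by
    rw [hLdef, ← integral_div]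
    refine integral_mono hf (hInt.div_const t) fun q => ?_
    exact div_le_div_of_nonneg_left (by positivity) ht (by nlinarith [hω0 q])
  have hI0 : 0 ≤ ∫ q, ‖lam q‖ ^ 2 / (ω q + t) :=
    integral_nonneg fun q => div_nonneg (by positivity) (by nlinarith [hω0 q])
  have ht2e : 0 ≤ t - 2 * (σ * ε) := by rw [heq]; positivity
  -- E² ≤ L α² + ε²
  have hEsq : E α ^ 2 ≤ L * α ^ 2 + ε ^ 2 := by
    have h3 : (t - 2 * (σ * ε)) * t ≤ α ^ 2 * L := by
      have := mul_le_mul_of_nonneg_left hup (by positivity : (0:ℝ) ≤ α ^ 2)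
      rw [← heq] at this
      calc (t - 2 * (σ * ε)) * t ≤ (α ^ 2 * (L / t)) * t := by
            apply mul_le_mul_of_nonneg_right this ht.le
        _ = α ^ 2 * L := by field_simp
    have hEt : E α = σ * ε - t := by simp only [htdef]; ring
    nlinarith [he2]
  -- lower bound: E α + s α ≥ -ε
  have hlow : -ε ≤ E α + s * α := by
    by_contra hcon
    push_neg at hcon
    have hkey2 := mul_self_lt_mul_self (by positivity : (0:ℝ) ≤ s * α + ε)
      (by linarith : s * α + ε < -E α)
    nlinarith [hEsq, hsL, mul_pos (mul_pos hs0 hα0) hε]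
  -- lower bound on the integral
  have hdown : b ^ 2 / (M + t) ≤ ∫ q, ‖lam q‖ ^ 2 / (ω q + t) := by
    have hMt : 0 < M + t := by linarith
    have step : (∫ q, g q) / (M + t) ≤ ∫ q, ‖lam q‖ ^ 2 / (ω q + t) := by
      rw [← integral_div]
      refine integral_mono (hgInt.div_const _) hf fun q => ?_
      simp only [hgdef, Set.indicator_apply, Set.mem_setOf_eq]
      split
      · next h => exact div_le_div_of_nonneg_left (by positivity) (by nlinarith [hω0 q]) (by linarith)
      · next h =>
        rw [zero_div]
        exact div_nonneg (by positivity) (by nlinarith [hω0 q])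
    calc b ^ 2 / (M + t) ≤ (∫ q, g q) / (M + t) :=
          (div_le_div_iff_of_pos_right hMt).mpr hMle
      _ ≤ _ := step
  have hkey : b ^ 2 * α ^ 2 ≤ (t - 2 * (σ * ε)) * (M + t) := by
    have hMt : 0 < M + t := by linarith
    have := mul_le_mul_of_nonneg_left hdown (by positivity : (0:ℝ) ≤ α ^ 2)
    rw [← heq] at this
    calc b ^ 2 * α ^ 2 = (α ^ 2 * (b ^ 2 / (M + t))) * (M + t) := by field_simp
      _ ≤ (t - 2 * (σ * ε)) * (M + t) := mul_le_mul_of_nonneg_right this hMt.le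
  -- hence t ≥ b α - (M + 2 ε + 1)
  have hba : (M + 1) * (2 * ε + 1) ≤ b * α := by
    rw [div_le_iff₀ hb0] at hα2; linarith [hα2]
  have hstep : b * α - (M + 2 * ε + 1) ≤ t := by
    by_contra hcon
    push_neg at hcon
    nlinarith [heabs.1, heabs.2, ht, hM0, hb0, hα0, hε, hkey, hba]
  -- conclude
  have hEt : E α = σ * ε - t := by simp only [htdef]; ring
  have hhigh : E α + s * α ≤ c * α := by
    have h5 : E α + s * α ≤ (s - b) * α + (M + 3 * ε + 1) := by
      rw [hEt]; nlinarith [heabs.1]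
    have h6 : (s - b) * α ≤ (c / 2) * α := by
      apply mul_le_mul_of_nonneg_right hsb hα0.le
    have h7 : M + 3 * ε + 1 ≤ (c / 2) * α := by
      rw [div_le_iff₀ hc] at hα3; linarith
    linarith
  rw [Real.norm_eq_abs, Real.norm_eq_abs, abs_of_pos hα0, abs_le]
  constructor
  · rw [div_le_iff₀ hc] at hα4; linarith
  · linarith
end

section
/- Let λ ∈ L²(ℝᵈ) with ‖λ‖ > 0, ω : ℝᵈ → [0,∞) measurable, ε > 0, σ ∈ {±1}. For large α > 0 let E = E(α) < σε be the unique zero of Φ_α(z) = -σε - z - α²∫|λ(q)|²/(ω(q)+σε-z)dq, and set c = σε - E > 0. Let Δ be the multiplication operator by Δ(k) = ω(k) - σε - E - α²∫|λ(q)|²/(ω(k)+ω(q)+σε-E)dq on L²(ℝᵈ), and let K₂ be the integral operator with kernel conj(λ(k₁))λ(k₂)·Ψ₂(k₁,k₂), where Ψ₂(k₁,k₂) = 1/(ω(k₁)+ω(k₂)+c) - 1/(ω(k₁)+c) - 1/(ω(k₂)+c) + 1/c. Then for all sufficiently large α, Δ - α²K₂ ≥ 0 in the sense of quadratic forms on {ψ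 ∈ L² : ∫ω|ψ|² < ∞}. -/
open MeasureTheory Filter Complex Topology

lemma psi2_abs_le (x y c : ℝ) (hx : 0 ≤ x) (hy : 0 ≤ y) (hc : 0 < c) :
    |1/(x+y+c) - 1/(x+c) - 1/(y+c) + 1/c| ≤ Real.sqrt x * Real.sqrt y / (2*c^2) := by
  have hxc : 0 < x + c := by linarith
  have hyc : 0 < y + c := by linarith
  have hxyc : 0 < x + y + c := by linarith
  have key : 1/(x+y+c) - 1/(x+c) - 1/(y+c) + 1/c
      = x*y*(x+y+2*c)/(c*((x+c)*((y+c)*(x+y+c)))) := by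
    field_simp
    ring
  rw [key, _root_.abs_of_nonneg (by positivity)]
  rw [div_le_div_iff₀ (by positivity) (by positivity)]
  have hs : (Real.sqrt x)^2 = x := Real.sq_sqrt hx
  have ht : (Real.sqrt y)^2 = y := Real.sq_sqrt hy
  have hs0 : 0 ≤ Real.sqrt x := Real.sqrt_nonneg x
  have ht0 : 0 ≤ Real.sqrt y := Real.sqrt_nonneg y
  set s := Real.sqrt x
  set t := Real.sqrt y
  rw [← hs, ← ht]
  have h2 : (s*t*c*(s^2+t^2+c)) * (4*(s*t)*c) ≤ (s*t*c*(s^2+t^2+c)) * ((s^2+c)*(t^2+c)) := by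
    refine mul_le_mul_of_nonneg_left ?_ (by positivity)
    nlinarith [sq_nonneg (s-t), sq_nonneg (s*t-c)]
  have h3 : 2*c^2*(s^2*t^2)*(s^2+t^2+2*c) ≤ 4*c^2*(s^2*t^2)*(s^2+t^2+c) := by
    nlinarith [mul_nonneg (mul_nonneg (mul_nonneg (sq_nonneg c) (sq_nonneg s)) (sq_nonneg t)) (add_nonneg (sq_nonneg s) (sq_nonneg t))]
  nlinarith [h2, h3]

lemma double_integral_norm_le {X : Type*} [MeasurableSpace X] {μ : Measure X}
    (h : X → X → ℂ) (F : X → ℝ) (C : ℝ) (hC : 0 ≤ C)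
    (hF0 : ∀ k, 0 ≤ F k) (hFint : Integrable F μ)
    (hb : ∀ k₁ k₂, ‖h k₁ k₂‖ ≤ C * (F k₁ * F k₂)) :
    ‖∫ k₁, ∫ k₂, h k₁ k₂ ∂μ ∂μ‖ ≤ C * ((∫ k, F k ∂μ) * (∫ k, F k ∂μ)) := by
  have hFI : 0 ≤ ∫ k, F k ∂μ := integral_nonneg hF0
  have inner : ∀ k₁, ‖∫ k₂, h k₁ k₂ ∂μ‖ ≤ C * F k₁ * ∫ k, F k ∂μ := by
    intro k₁
    by_cases hi : Integrable (h k₁) μ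
    · calc ‖∫ k₂, h k₁ k₂ ∂μ‖ ≤ ∫ k₂, ‖h k₁ k₂‖ ∂μ := norm_integral_le_integral_norm _
      _ ≤ ∫ k₂, C * F k₁ * F k₂ ∂μ := by
            refine integral_mono hi.norm (hFint.const_mul _) (fun k₂ => ?_)
            simpa [mul_assoc] using hb k₁ k₂
      _ = C * F k₁ * ∫ k, F k ∂μ := integral_const_mul _ _
    · rw [integral_undef hi, norm_zero]
      exact mul_nonneg (mul_nonneg hC (hF0 k₁)) hFI
  calc ‖∫ k₁, ∫ k₂, h k₁ k₂ ∂μ ∂μ‖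
      ≤ ∫ k₁, ‖∫ k₂, h k₁ k₂ ∂μ‖ ∂μ := norm_integral_le_integral_norm _
    _ ≤ C * ((∫ k, F k ∂μ) * (∫ k, F k ∂μ)) := by
      by_cases hGn : Integrable (fun k₁ => ‖∫ k₂, h k₁ k₂ ∂μ‖) μ
      · calc ∫ k₁, ‖∫ k₂, h k₁ k₂ ∂μ‖ ∂μ
            ≤ ∫ k₁, C * F k₁ * ∫ k, F k ∂μ ∂μ :=
              integral_mono hGn ((hFint.const_mul C).mul_const _) inner
          _ = C * ((∫ k, F k ∂μ) * (∫ k, F k ∂μ)) := by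
              rw [integral_mul_const, integral_const_mul]; ring
      · rw [integral_undef hGn]
        exact mul_nonneg hC (mul_nonneg hFI hFI)

lemma integral_cs {X : Type*} [MeasurableSpace X] {μ : Measure X}
    (u v : X → ℝ) (hu0 : ∀ x, 0 ≤ u x) (hv0 : ∀ x, 0 ≤ v x)
    (hu : MemLp u 2 μ) (hv : MemLp v 2 μ) :
    (∫ x, u x * v x ∂μ)^2 ≤ (∫ x, u x ^ 2 ∂μ) * (∫ x, v x ^ 2 ∂μ) := by
  have hpq : Real.HolderConjugate 2 2 := Real.HolderConjugate.two_two
  have h2 : (ENNReal.ofReal (2:ℝ)) = 2 := by norm_num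
  have h := integral_mul_le_Lp_mul_Lq_of_nonneg (μ := μ) hpq
    (Eventually.of_forall hu0) (Eventually.of_forall hv0) (h2 ▸ hu) (h2 ▸ hv)
  have hu2 : ∀ x, u x ^ (2:ℝ) = u x ^ 2 := fun x => by
    rw [show ((2:ℝ)) = ((2:ℕ):ℝ) by norm_num, Real.rpow_natCast]
  have hv2 : ∀ x, v x ^ (2:ℝ) = v x ^ 2 := fun x => by
    rw [show ((2:ℝ)) = ((2:ℕ):ℝ) by norm_num, Real.rpow_natCast]
  simp only [hu2, hv2] at h
  have hU : 0 ≤ ∫ x, u x ^ 2 ∂μ := integral_nonneg fun x => sq_nonneg _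
  have hV : 0 ≤ ∫ x, v x ^ 2 ∂μ := integral_nonneg fun x => sq_nonneg _
  have huv0 : 0 ≤ ∫ x, u x * v x ∂μ := integral_nonneg fun x => mul_nonneg (hu0 x) (hv0 x)
  calc (∫ x, u x * v x ∂μ)^2
      ≤ ((∫ x, u x ^ 2 ∂μ) ^ (1/(2:ℝ)) * (∫ x, v x ^ 2 ∂μ) ^ (1/(2:ℝ)))^2 := by
        exact pow_le_pow_left₀ huv0 h 2
    _ = (∫ x, u x ^ 2 ∂μ) * (∫ x, v x ^ 2 ∂μ) := by
        rw [mul_pow, ← Real.rpow_natCast (_ ^ (1/(2:ℝ))) 2, ← Real.rpow_natCast (_ ^ (1/(2:ℝ))) 2,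
          ← Real.rpow_mul hU, ← Real.rpow_mul hV]
        norm_num

set_option maxHeartbeats 1600000 in
/-- For all sufficiently large coupling, Δ - α²K₂ ≥ 0 in the sense of quadratic forms. -/
theorem Delta_minus_K2_nonneg {d : ℕ} (ε σ : ℝ) (hε : 0 < ε) (hσ : σ = 1 ∨ σ = -1)
    (lam : (Fin d → ℝ) → ℂ) (hlam : MemLp lam 2 volume)
    (hlamnorm : 0 < ∫ q, ‖lam q‖ ^ 2)
    (ω : (Fin d → ℝ) → ℝ) (hω : Measurable ω) (hω0 : ∀ k, 0 ≤ ω k)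
    (E : ℝ → ℝ)
    (hE : ∀ᶠ α in atTop, E α < σ * ε ∧
      -σ * ε - E α - α ^ 2 * ∫ q, ‖lam q‖ ^ 2 / (ω q + σ * ε - E α) = 0) :
    ∀ᶠ α in atTop, ∀ ψ : (Fin d → ℝ) → ℂ, MemLp ψ 2 volume →
      Integrable (fun k => ω k * ‖ψ k‖ ^ 2) volume →
      α ^ 2 * (∫ k₁, ∫ k₂, (starRingEnd ℂ) (lam k₁) * lam k₂ *
            (((1 / (ω k₁ + ω k₂ + (σ * ε - E α)) - 1 / (ω k₁ + (σ * ε - E α))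
              - 1 / (ω k₂ + (σ * ε - E α)) + 1 / (σ * ε - E α) : ℝ)) : ℂ) *
            ψ k₂ * (starRingEnd ℂ) (ψ k₁)).re
        ≤ ∫ k, (ω k - σ * ε - E α
            - α ^ 2 * ∫ q, ‖lam q‖ ^ 2 / (ω k + ω q + σ * ε - E α)) * ‖ψ k‖ ^ 2 := by
  set L := ∫ q, ‖lam q‖ ^ 2 with hLdef
  have hL0 : 0 < L := hlamnorm
  have hlam2int : Integrable (fun q => ‖lam q‖ ^ 2) volume :=
    (memLp_two_iff_integrable_sq_norm hlam.aestronglyMeasurable).mp hlam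
  obtain ⟨g, hgm, hge⟩ := hlam.aestronglyMeasurable
  have hNae : (fun q => ‖lam q‖ ^ 2) =ᵐ[volume] (fun q => ‖g q‖ ^ 2) :=
    hge.mono fun q hq => by simp only [hq]
  -- find a cutoff M capturing 3/4 of the L² mass of lam
  have htend : Tendsto (fun n : ℕ => ∫ q, Set.indicator {q | ω q ≤ (n:ℝ)}
      (fun q => ‖lam q‖ ^ 2) q) atTop (𝓝 L) := by
    refine tendsto_integral_of_dominated_convergence (fun q => ‖lam q‖ ^ 2)
      (fun n => hlam2int.1.indicator (measurableSet_le hω measurable_const))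
      hlam2int (fun n => Eventually.of_forall fun q => ?_)
      (Eventually.of_forall fun q => ?_)
    · by_cases hq : ω q ≤ (n:ℝ)
      · simp [Set.indicator_of_mem, hq, Real.norm_of_nonneg (sq_nonneg _), Set.mem_setOf_eq]
      · simp [Set.indicator_of_notMem, hq, Set.mem_setOf_eq]
    · refine tendsto_const_nhds.congr' ?_
      filter_upwards [eventually_ge_atTop ⌈ω q⌉₊] with n hn
      have : ω q ≤ (n:ℝ) := (Nat.le_ceil _).trans (by exact_mod_cast hn)
      simp [Set.indicator_of_mem, this, Set.mem_setOf_eq]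
  obtain ⟨M, hM⟩ := (htend.eventually (eventually_gt_nhds (by linarith : (3/4)*L < L))).exists
  set A : ℝ := (4*(Real.sqrt (L/2)*((M:ℝ)+2*ε) + 2*ε*(M:ℝ)) + L)/L with hAdef
  filter_upwards [hE, eventually_ge_atTop A, eventually_ge_atTop (1:ℝ)] with α hEα hαA hα1
  obtain ⟨hElt, hEeq⟩ := hEα
  have hα0 : (0:ℝ) < α := lt_of_lt_of_le one_pos hα1
  simp only [add_sub_assoc] at hEeq ⊢
  set c := σ * ε - E α with hcdef
  have hc0 : 0 < c := sub_pos.2 hElt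
  -- integrability of the basic integrand
  have hdiv_int : ∀ (f : (Fin d → ℝ) → ℝ), Measurable f → (∀ q, c ≤ f q) →
      Integrable (fun q => ‖lam q‖ ^ 2 / f q) volume := by
    intro f hf hfc
    simp only [div_eq_mul_inv]
    refine Integrable.mono' (by simpa [div_eq_mul_inv] using hlam2int.div_const c)
      (hlam2int.1.mul hf.inv.aestronglyMeasurable) (Eventually.of_forall fun q => ?_)
    simp only [← div_eq_mul_inv]
    have hfq : 0 < f q := lt_of_lt_of_le hc0 (hfc q)
    rw [Real.norm_of_nonneg (by positivity)]
    exact div_le_div_of_nonneg_left (sq_nonneg _) hc0 (hfc q)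
  have hIint : Integrable (fun q => ‖lam q‖ ^ 2 / (ω q + c)) volume :=
    hdiv_int _ (hω.add_const c) (fun q => by linarith [hω0 q])
  set I := ∫ q, ‖lam q‖ ^ 2 / (ω q + c) with hIdef
  have hEeq' : α ^ 2 * I = c - 2*(σ*ε) := by
    rw [hcdef]; linarith [hEeq]
  -- lower bound on I
  have hIlb : (3/4)*L / ((M:ℝ)+c) ≤ I := by
    have hMc : (0:ℝ) < (M:ℝ) + c := by positivity
    have step1 : ∫ q, Set.indicator {q | ω q ≤ (M:ℝ)} (fun q => ‖lam q‖ ^ 2) q / ((M:ℝ)+c)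
        ≤ I := by
      refine integral_mono ((hlam2int.indicator (measurableSet_le hω measurable_const)).div_const _)
        hIint (fun q => ?_)
      by_cases hq : ω q ≤ (M:ℝ)
      · rw [Set.indicator_of_mem (by simpa using hq)]
        exact div_le_div_of_nonneg_left (sq_nonneg _) (by linarith [hω0 q]) (by linarith)
      · rw [Set.indicator_of_notMem (by simpa using hq), zero_div]
        exact div_nonneg (sq_nonneg _) (by linarith [hω0 q])
    calc (3/4)*L / ((M:ℝ)+c)
        ≤ (∫ q, Set.indicator {q | ω q ≤ (M:ℝ)} (fun q => ‖lam q‖ ^ 2) q) / ((M:ℝ)+c) :=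
          (div_le_div_iff_of_pos_right hMc).2 hM.le
      _ = ∫ q, Set.indicator {q | ω q ≤ (M:ℝ)} (fun q => ‖lam q‖ ^ 2) q / ((M:ℝ)+c) :=
          (integral_div _ _).symm
      _ ≤ I := step1
  have hkey : (3/4)*(α^2*L) ≤ (c+2*ε)*((M:ℝ)+c) := by
    have hMc : (0:ℝ) < (M:ℝ) + c := by positivity
    have h1 : α^2 * ((3/4)*L / ((M:ℝ)+c)) ≤ α^2 * I :=
      mul_le_mul_of_nonneg_left hIlb (sq_nonneg α)
    have h2 : c - 2*(σ*ε) ≤ c + 2*ε := by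
      rcases hσ with h | h <;> subst h <;> nlinarith
    rw [hEeq'] at h1
    have h3 : (3/4)*(α^2*L) / ((M:ℝ)+c) ≤ c + 2*ε := by
      calc (3/4)*(α^2*L) / ((M:ℝ)+c) = α^2 * ((3/4)*L / ((M:ℝ)+c)) := by ring
        _ ≤ c - 2*(σ*ε) := h1
        _ ≤ c + 2*ε := h2
    exact (div_le_iff₀ hMc).1 h3
  -- the crucial lower bound on c
  have hc2 : α^2*L ≤ 2*c^2 := by
    by_contra hcon
    push_neg at hcon
    set s := Real.sqrt (L/2) with hsdef
    have hs2 : s^2 = L/2 := Real.sq_sqrt (by linarith)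
    have hs0 : 0 < s := Real.sqrt_pos.2 (by linarith)
    have hclt : c < α * s := by
      refine lt_of_pow_lt_pow_left₀ 2 (by positivity) ?_
      nlinarith
    have hαA' : 4*(s*((M:ℝ)+2*ε) + 2*ε*(M:ℝ)) + L ≤ α*L := by
      rw [hAdef] at hαA
      exact (div_le_iff₀ hL0).1 hαA
    have e1 : c^2 < α^2*(L/2) := by nlinarith
    have e2 : c*((M:ℝ)+2*ε) ≤ α*s*((M:ℝ)+2*ε) :=
      mul_le_mul_of_nonneg_right hclt.le (by positivity)
    have e3 : (1/4)*(α^2*L) < α*s*((M:ℝ)+2*ε) + 2*ε*(M:ℝ) := by nlinarith [hkey, e1, e2]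
    have e4 : α*(4*(s*((M:ℝ)+2*ε) + 2*ε*(M:ℝ)) + L) ≤ α*(α*L) :=
      mul_le_mul_of_nonneg_left hαA' hα0.le
    nlinarith [e3, e4, mul_nonneg (mul_nonneg (by linarith : (0:ℝ) ≤ α - 1) hε.le) (Nat.cast_nonneg M)]
  -- now the quadratic form estimate
  intro ψ hψ hψω
  have hψ2int : Integrable (fun k => ‖ψ k‖ ^ 2) volume :=
    (memLp_two_iff_integrable_sq_norm hψ.aestronglyMeasurable).mp hψ
  set W := ∫ k, ω k * ‖ψ k‖ ^ 2 with hWdef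
  have hW0 : 0 ≤ W := integral_nonneg fun k => mul_nonneg (hω0 k) (sq_nonneg _)
  -- Cauchy-Schwarz setup
  have hvAESM : AEStronglyMeasurable (fun k => Real.sqrt (ω k) * ‖ψ k‖) volume :=
    ((hω.sqrt).aestronglyMeasurable).mul hψ.aestronglyMeasurable.norm
  have hv : MemLp (fun k => Real.sqrt (ω k) * ‖ψ k‖) 2 volume := by
    refine (memLp_two_iff_integrable_sq hvAESM).2 ?_
    have : (fun k => (Real.sqrt (ω k) * ‖ψ k‖) ^ 2) = fun k => ω k * ‖ψ k‖ ^ 2 :=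
      funext fun k => by rw [mul_pow, Real.sq_sqrt (hω0 k)]
    rw [this]; exact hψω
  have hu : MemLp (fun k => ‖lam k‖) 2 volume := hlam.norm
  have hFint : Integrable (fun k => ‖lam k‖ * (Real.sqrt (ω k) * ‖ψ k‖)) volume := by
    refine Integrable.mono' ((hu.integrable_sq.add hv.integrable_sq).div_const 2)
      (hu.aestronglyMeasurable.mul hvAESM) (Eventually.of_forall fun k => ?_)
    rw [Real.norm_of_nonneg (by positivity)]
    simp only [Pi.add_apply]
    nlinarith [sq_nonneg (‖lam k‖ - Real.sqrt (ω k) * ‖ψ k‖)]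
  have hCS : (∫ k, ‖lam k‖ * (Real.sqrt (ω k) * ‖ψ k‖))^2 ≤ L * W := by
    have h := integral_cs (fun k => ‖lam k‖) (fun k => Real.sqrt (ω k) * ‖ψ k‖)
      (fun k => norm_nonneg _) (fun k => mul_nonneg (Real.sqrt_nonneg _) (norm_nonneg _)) hu hv
    have hveq : (fun k => (Real.sqrt (ω k) * ‖ψ k‖) ^ 2) = fun k => ω k * ‖ψ k‖ ^ 2 :=
      funext fun k => by rw [mul_pow, Real.sq_sqrt (hω0 k)]
    calc (∫ k, ‖lam k‖ * (Real.sqrt (ω k) * ‖ψ k‖))^2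
        ≤ (∫ k, ‖lam k‖ ^ 2) * (∫ k, (Real.sqrt (ω k) * ‖ψ k‖) ^ 2) := h
      _ = L * W := by rw [hveq]
  -- bound on the kernel quadratic form
  have hD : ‖∫ k₁, ∫ k₂, (starRingEnd ℂ) (lam k₁) * lam k₂ *
        (((1 / (ω k₁ + ω k₂ + c) - 1 / (ω k₁ + c) - 1 / (ω k₂ + c) + 1 / c : ℝ)) : ℂ) *
        ψ k₂ * (starRingEnd ℂ) (ψ k₁)‖
      ≤ (1/(2*c^2)) * ((∫ k, ‖lam k‖ * (Real.sqrt (ω k) * ‖ψ k‖)) *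
          (∫ k, ‖lam k‖ * (Real.sqrt (ω k) * ‖ψ k‖))) := by
    refine double_integral_norm_le _ _ _ (by positivity)
      (fun k => mul_nonneg (norm_nonneg _) (mul_nonneg (Real.sqrt_nonneg _) (norm_nonneg _)))
      hFint (fun k₁ k₂ => ?_)
    calc ‖(starRingEnd ℂ) (lam k₁) * lam k₂ *
        (((1 / (ω k₁ + ω k₂ + c) - 1 / (ω k₁ + c) - 1 / (ω k₂ + c) + 1 / c : ℝ)) : ℂ) *
        ψ k₂ * (starRingEnd ℂ) (ψ k₁)‖
        = ‖lam k₁‖ * ‖lam k₂‖ *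
          |1 / (ω k₁ + ω k₂ + c) - 1 / (ω k₁ + c) - 1 / (ω k₂ + c) + 1 / c| *
          ‖ψ k₂‖ * ‖ψ k₁‖ := by
          simp only [norm_mul, RCLike.norm_conj, Complex.norm_real, Real.norm_eq_abs]
      _ ≤ ‖lam k₁‖ * ‖lam k₂‖ *
          (Real.sqrt (ω k₁) * Real.sqrt (ω k₂) / (2*c^2)) * ‖ψ k₂‖ * ‖ψ k₁‖ := by
          gcongr
          exact psi2_abs_le _ _ _ (hω0 k₁) (hω0 k₂) hc0
      _ = (1/(2*c^2)) * ((‖lam k₁‖ * (Real.sqrt (ω k₁) * ‖ψ k₁‖)) *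
          (‖lam k₂‖ * (Real.sqrt (ω k₂) * ‖ψ k₂‖))) := by ring
  -- pieces for the RHS
  have hJint : ∀ k, Integrable (fun q => ‖lam q‖ ^ 2 / (ω k + ω q + c)) volume :=
    fun k => hdiv_int _ ((hω.const_add (ω k)).add_const c) (fun q => by linarith [hω0 q, hω0 k])
  have hJ0 : ∀ k, 0 ≤ ∫ q, ‖lam q‖ ^ 2 / (ω k + ω q + c) := by
    intro k
    refine integral_nonneg fun q => div_nonneg (sq_nonneg _) (by linarith [hω0 q, hω0 k])
  have hJle : ∀ k, (∫ q, ‖lam q‖ ^ 2 / (ω k + ω q + c)) ≤ I := by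
    intro k
    refine integral_mono (hJint k) hIint (fun q => ?_)
    exact div_le_div_of_nonneg_left (sq_nonneg _) (by linarith [hω0 q]) (by linarith [hω0 k])
  -- measurability of k ↦ J k
  have hJm : Measurable (fun k => ∫ q, ‖lam q‖ ^ 2 / (ω k + ω q + c)) := by
    have hprod : StronglyMeasurable (fun p : (Fin d → ℝ) × (Fin d → ℝ) =>
        ‖g p.2‖ ^ 2 / (ω p.1 + ω p.2 + c)) := by
      refine Measurable.stronglyMeasurable ?_
      exact (((hgm.measurable.comp measurable_snd).norm.pow_const 2).div
        (((hω.comp measurable_fst).add (hω.comp measurable_snd)).add_const c))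
    have hJeq : (fun k => ∫ q, ‖lam q‖ ^ 2 / (ω k + ω q + c))
        = fun k => ∫ q, ‖g q‖ ^ 2 / (ω k + ω q + c) := by
      refine funext fun k => integral_congr_ae ?_
      filter_upwards [hge] with q hq
      rw [hq]
    rw [hJeq]
    exact hprod.integral_prod_right'.measurable
  -- the RHS integrand dominates ω k * ‖ψ k‖²
  have hpoint : ∀ k, ω k * ‖ψ k‖ ^ 2
      ≤ (ω k - σ * ε - E α - α ^ 2 * ∫ q, ‖lam q‖ ^ 2 / (ω k + ω q + c)) * ‖ψ k‖ ^ 2 := by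
    intro k
    refine mul_le_mul_of_nonneg_right ?_ (sq_nonneg _)
    have h1 : α ^ 2 * (∫ q, ‖lam q‖ ^ 2 / (ω k + ω q + c)) ≤ α ^ 2 * I :=
      mul_le_mul_of_nonneg_left (hJle k) (sq_nonneg α)
    rw [hEeq'] at h1
    have := hcdef
    linarith
  have hΦint : Integrable (fun k => (ω k - σ * ε - E α
      - α ^ 2 * ∫ q, ‖lam q‖ ^ 2 / (ω k + ω q + c)) * ‖ψ k‖ ^ 2) volume := by
    refine Integrable.mono' (hψω.add (hψ2int.const_mul (c - 2*(σ*ε))))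
      (((((hω.sub_const (σ*ε)).sub_const (E α)).sub (hJm.const_mul (α^2))).aestronglyMeasurable).mul
        hψ2int.aestronglyMeasurable)
      (Eventually.of_forall fun k => ?_)
    have h0 : 0 ≤ (ω k - σ * ε - E α - α ^ 2 * ∫ q, ‖lam q‖ ^ 2 / (ω k + ω q + c)) * ‖ψ k‖ ^ 2 :=
      le_trans (mul_nonneg (hω0 k) (sq_nonneg _)) (hpoint k)
    rw [Real.norm_of_nonneg h0]
    have h6 : ω k - σ * ε - E α - α ^ 2 * (∫ q, ‖lam q‖ ^ 2 / (ω k + ω q + c))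
        ≤ ω k + (c - 2*(σ*ε)) := by
      have := mul_nonneg (sq_nonneg α) (hJ0 k)
      have := hcdef
      linarith
    simp only [Pi.add_apply]
    nlinarith [mul_le_mul_of_nonneg_right h6 (sq_nonneg ‖ψ k‖)]
  -- put everything together
  calc α ^ 2 * (∫ k₁, ∫ k₂, (starRingEnd ℂ) (lam k₁) * lam k₂ *
        (((1 / (ω k₁ + ω k₂ + c) - 1 / (ω k₁ + c) - 1 / (ω k₂ + c) + 1 / c : ℝ)) : ℂ) *
        ψ k₂ * (starRingEnd ℂ) (ψ k₁)).re
      ≤ α ^ 2 * ‖∫ k₁, ∫ k₂, (starRingEnd ℂ) (lam k₁) * lam k₂ *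
        (((1 / (ω k₁ + ω k₂ + c) - 1 / (ω k₁ + c) - 1 / (ω k₂ + c) + 1 / c : ℝ)) : ℂ) *
        ψ k₂ * (starRingEnd ℂ) (ψ k₁)‖ :=
        mul_le_mul_of_nonneg_left (Complex.re_le_norm _) (sq_nonneg α)
    _ ≤ α ^ 2 * ((1/(2*c^2)) * ((∫ k, ‖lam k‖ * (Real.sqrt (ω k) * ‖ψ k‖)) *
          (∫ k, ‖lam k‖ * (Real.sqrt (ω k) * ‖ψ k‖)))) :=
        mul_le_mul_of_nonneg_left hD (sq_nonneg α)
    _ ≤ α ^ 2 * ((1/(2*c^2)) * (L * W)) := by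
        have hF0 : (∫ k, ‖lam k‖ * (Real.sqrt (ω k) * ‖ψ k‖)) *
            (∫ k, ‖lam k‖ * (Real.sqrt (ω k) * ‖ψ k‖)) ≤ L * W := by
          rw [← pow_two]; exact hCS
        exact mul_le_mul_of_nonneg_left
          (mul_le_mul_of_nonneg_left hF0 (by positivity)) (sq_nonneg α)
    _ ≤ W := by
        rw [show α^2 * ((1/(2*c^2)) * (L * W)) = (α^2*L)*W/(2*c^2) by ring,
          div_le_iff₀ (by positivity)]
        nlinarith [mul_le_mul_of_nonneg_right hc2 hW0]
    _ ≤ ∫ k, (ω k - σ * ε - E α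
        - α ^ 2 * ∫ q, ‖lam q‖ ^ 2 / (ω k + ω q + c)) * ‖ψ k‖ ^ 2 :=
        integral_mono hψω hΦint hpoint
end

section
/- Let ψ : [0, δ₀) × [1/2, ∞) → ℝ be continuous, strictly increasing in the second variable, with ψ(0, 1) = 0 and ∂ψ/∂y(0,1) existing, positive, and ψ continuous at (0,1). Then there exist δ ∈ (0, δ₀] and a unique continuous function Ê : [0, δ) → ℝ with Ê(0) = 1 and ψ(β, Ê(β)) = 0 for all β ∈ [0, δ). -/
open Set Function Filter Topology

/-- A one-sided implicit function theorem (cf. Kumagai 1980): continuity plus strict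
monotonicity in the second variable yield a unique continuous implicit function. -/
theorem one_sided_implicit_function (δ₀ : ℝ) (hδ₀ : 0 < δ₀)
    (ψ : ℝ → ℝ → ℝ)
    (hcont : ContinuousOn (uncurry ψ) (Ico (0 : ℝ) δ₀ ×ˢ Ici (1 / 2 : ℝ)))
    (hmono : ∀ x ∈ Ico (0 : ℝ) δ₀, StrictMonoOn (ψ x) (Ici (1 / 2 : ℝ)))
    (hzero : ψ 0 1 = 0)
    (deriv : ℝ) (hderiv_pos : 0 < deriv)
    (hderiv : HasDerivWithinAt (fun y => ψ 0 y) deriv (Ici (1 / 2 : ℝ)) 1) :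
    ∃ δ : ℝ, 0 < δ ∧ δ ≤ δ₀ ∧
      ∃ Ehat : ℝ → ℝ,
        ContinuousOn Ehat (Ico (0 : ℝ) δ) ∧ Ehat 0 = 1 ∧
        (∀ β ∈ Ico (0 : ℝ) δ, Ehat β ∈ Ici (1 / 2 : ℝ) ∧ ψ β (Ehat β) = 0) ∧
        ∀ g : ℝ → ℝ, ContinuousOn g (Ico (0 : ℝ) δ) → g 0 = 1 →
          (∀ β ∈ Ico (0 : ℝ) δ, g β ∈ Ici (1 / 2 : ℝ) ∧ ψ β (g β) = 0) →
          ∀ β ∈ Ico (0 : ℝ) δ, g β = Ehat β := by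
  have h0mem : (0 : ℝ) ∈ Ico (0 : ℝ) δ₀ := ⟨le_refl 0, hδ₀⟩
  have h12 : ((1:ℝ)/2) ∈ Ici ((1:ℝ)/2) := mem_Ici.mpr le_rfl
  have h34 : ((3:ℝ)/4) ∈ Ici ((1:ℝ)/2) := by norm_num
  have h54 : ((5:ℝ)/4) ∈ Ici ((1:ℝ)/2) := by norm_num
  have h1 : (1:ℝ) ∈ Ici ((1:ℝ)/2) := by norm_num
  -- continuity in each variable
  have hcx : ∀ c ∈ Ici ((1:ℝ)/2), ContinuousOn (fun β => ψ β c) (Ico (0:ℝ) δ₀) := by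
    intro c hc
    exact hcont.comp (continuousOn_id.prodMk continuousOn_const) (fun β hβ => ⟨hβ, hc⟩)
  have hcy : ∀ β ∈ Ico (0:ℝ) δ₀, ContinuousOn (ψ β) (Ici ((1:ℝ)/2)) := by
    intro β hβ
    exact hcont.comp (continuousOn_const.prodMk continuousOn_id) (fun y hy => ⟨hβ, hy⟩)
  have hneg0 : ψ 0 (3/4) < 0 := by
    have := hmono 0 h0mem h34 h1 (by norm_num)
    rwa [hzero] at this
  have hpos0 : 0 < ψ 0 (5/4) := by
    have := hmono 0 h0mem h1 h54 (by norm_num)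
    rwa [hzero] at this
  -- find δ with ψ β (3/4) < 0 < ψ β (5/4) on [0,δ)
  have tneg : ∀ᶠ β in 𝓝[Ico (0:ℝ) δ₀] 0, ψ β (3/4) < 0 :=
    ((hcx _ h34) 0 h0mem).eventually_lt_const hneg0
  have tpos : ∀ᶠ β in 𝓝[Ico (0:ℝ) δ₀] 0, 0 < ψ β (5/4) :=
    ((hcx _ h54) 0 h0mem).eventually_const_lt hpos0
  have tboth := tneg.and tpos
  obtain ⟨r, hr, hball⟩ := Metric.mem_nhdsWithin_iff.mp tboth
  set δ := min r δ₀ with hδdef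
  have hδpos : 0 < δ := lt_min hr hδ₀
  have hδle : δ ≤ δ₀ := min_le_right _ _
  have hsub : Ico (0:ℝ) δ ⊆ Ico (0:ℝ) δ₀ := Ico_subset_Ico_right hδle
  have hkey : ∀ β ∈ Ico (0:ℝ) δ, ψ β (3/4) < 0 ∧ 0 < ψ β (5/4) := by
    intro β hβ
    refine hball ⟨?_, hsub hβ⟩
    rw [Metric.mem_ball, Real.dist_eq, sub_zero, abs_of_nonneg hβ.1]
    exact lt_of_lt_of_le hβ.2 (min_le_left _ _)
  -- existence of zeros
  have hex : ∀ β, β ∈ Ico (0:ℝ) δ → ∃ y, y ∈ Icc ((3:ℝ)/4) ((5:ℝ)/4) ∧ ψ β y = 0 := by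
    intro β hβ
    have hc : ContinuousOn (ψ β) (Icc ((3:ℝ)/4) ((5:ℝ)/4)) :=
      (hcy β (hsub hβ)).mono (fun y hy => le_trans (by norm_num) hy.1)
    have := intermediate_value_Icc (by norm_num : (3:ℝ)/4 ≤ 5/4) hc
    have h0 : (0:ℝ) ∈ Icc (ψ β (3/4)) (ψ β (5/4)) :=
      ⟨(hkey β hβ).1.le, (hkey β hβ).2.le⟩
    obtain ⟨y, hy, hyz⟩ := this h0
    exact ⟨y, hy, hyz⟩
  choose! E hE1 hE2 using hex
  have hEici : ∀ β ∈ Ico (0:ℝ) δ, E β ∈ Ici ((1:ℝ)/2) := by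
    intro β hβ
    exact le_trans (by norm_num) (hE1 β hβ).1
  -- E 0 = 1
  have hE0 : E 0 = 1 := by
    have h0δ : (0:ℝ) ∈ Ico (0:ℝ) δ := ⟨le_refl 0, hδpos⟩
    refine (hmono 0 h0mem).injOn (hEici 0 h0δ) h1 ?_
    rw [hE2 0 h0δ, hzero]
  -- continuity of E
  have hEcont : ContinuousOn E (Ico (0:ℝ) δ) := by
    intro β₀ hβ₀
    rw [Metric.continuousWithinAt_iff]
    intro ε hε
    set ε' := min ε ((1:ℝ)/4) with hε'def
    have hε'pos : 0 < ε' := lt_min hε (by norm_num)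
    have hε'le : ε' ≤ 1/4 := min_le_right _ _
    have hlo : E β₀ - ε' ∈ Ici ((1:ℝ)/2) := by
      have := (hE1 β₀ hβ₀).1
      simp only [mem_Ici]; linarith
    have hhi : E β₀ + ε' ∈ Ici ((1:ℝ)/2) := by
      have := (hE1 β₀ hβ₀).1
      simp only [mem_Ici]; linarith
    have hn : ψ β₀ (E β₀ - ε') < 0 := by
      have := hmono β₀ (hsub hβ₀) hlo (hEici β₀ hβ₀) (by linarith)
      rwa [hE2 β₀ hβ₀] at this
    have hp : 0 < ψ β₀ (E β₀ + ε') := by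
      have := hmono β₀ (hsub hβ₀) (hEici β₀ hβ₀) hhi (by linarith)
      rwa [hE2 β₀ hβ₀] at this
    have tn : ∀ᶠ β in 𝓝[Ico (0:ℝ) δ₀] β₀, ψ β (E β₀ - ε') < 0 :=
      ((hcx _ hlo) β₀ (hsub hβ₀)).eventually_lt_const hn
    have tp : ∀ᶠ β in 𝓝[Ico (0:ℝ) δ₀] β₀, 0 < ψ β (E β₀ + ε') :=
      ((hcx _ hhi) β₀ (hsub hβ₀)).eventually_const_lt hp
    have tb := tn.and tp
    obtain ⟨r', hr', hb⟩ := Metric.mem_nhdsWithin_iff.mp tb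
    refine ⟨r', hr', fun β hβ hd => ?_⟩
    have ⟨hbn, hbp⟩ := hb ⟨Metric.mem_ball.mpr hd, hsub hβ⟩
    have hEβ := hE2 β hβ
    have hmonoβ := hmono β (hsub hβ)
    have h1' : E β₀ - ε' < E β := by
      by_contra h
      push_neg at h
      have : ψ β (E β) ≤ ψ β (E β₀ - ε') :=
        hmonoβ.monotoneOn (hEici β hβ) hlo h
      rw [hEβ] at this; linarith
    have h2' : E β < E β₀ + ε' := by
      by_contra h
      push_neg at h
      have : ψ β (E β₀ + ε') ≤ ψ β (E β) :=
        hmonoβ.monotoneOn hhi (hEici β hβ) h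
      rw [hEβ] at this; linarith
    rw [Real.dist_eq, abs_lt]
    constructor <;> [skip; skip] <;>
      first
        | (have := min_le_left ε ((1:ℝ)/4); linarith)
  -- conclusion
  refine ⟨δ, hδpos, hδle, E, hEcont, hE0, fun β hβ => ⟨hEici β hβ, hE2 β hβ⟩, ?_⟩
  intro g _ _ hg β hβ
  refine (hmono β (hsub hβ)).injOn (hg β hβ).1 (hEici β hβ) ?_
  rw [(hg β hβ).2, hE2 β hβ]
end
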